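/- For d = 8, the fourth transvectant (F,F)^4 of the generic binary octic F with itself has leading coefficient proportional to x_4·t − 4x_1·x_3 + 3x_2², which equals (z_4 + 3z_2²)/t². -/

import Mathlib

open MvPolynomial

/-- Coefficient ring `ℂ[t, x_1, …, x_8]` (variable `0` is `t`). -/
abbrev R8 := MvPolynomial (Fin 9) ℂ

/-- `ℂ[t, x_1, …, x_8][Y₁, Y₂]`, with `Y₁ = X 0` and `Y₂ = X 1` the outer variables. -/
abbrev S8 := MvPolynomial (Fin 2) R8

open Fin.NatCast in
/-- The semi-invariant `z_i` (here `d = 8`). -/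
noncomputable def z (i : ℕ) : R8 :=
  (∑ k ∈ Finset.range (i-1), ((-1:ℂ)^k * (i.choose k : ℂ)) •
      (X (((i-k : ℕ)) : Fin 9) * X 1 ^ k * X 0 ^ (i-k-1))) +
  (((i-1 : ℕ) : ℂ) * (-1:ℂ)^(i+1)) • (X 1 ^ i : R8)

open Fin.NatCast in
/-- The generic binary octic `F = Σ_{i=0}^{8} C(8,i)·x_i·Y₁^{8-i}·Y₂^i` (with `x_0 = t`). -/
noncomputable def F8 : S8 :=
  ∑ i ∈ Finset.range 9, ((Nat.choose 8 i : ℂ)) •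
    (MvPolynomial.C (X ((i : ℕ) : Fin 9)) * X 0 ^ (8 - i) * X 1 ^ i)

/-- The `r`-th transvectant. -/
noncomputable def transv (r : ℕ) (F G : S8) : S8 :=
  ∑ i ∈ Finset.range (r+1), ((-1:ℂ)^i * (r.choose i : ℂ)) •
    ((fun h => pderiv (0 : Fin 2) h)^[r-i] ((fun h => pderiv (1 : Fin 2) h)^[i] F) *
     (fun h => pderiv (0 : Fin 2) h)^[i] ((fun h => pderiv (1 : Fin 2) h)^[r-i] G))

lemma pderiv_natCast (i : Fin 2) (n : ℕ) : pderiv i (n : S8) = 0 := by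
  rw [← map_natCast (C : R8 →+* S8), pderiv_C]

lemma pderiv_csmul (i : Fin 2) (a : ℂ) (p : S8) :
    pderiv i (a • p) = a • pderiv i p := by
  rw [algebra_compatible_smul R8 a p, Derivation.map_smul, ← algebra_compatible_smul]

lemma csmulS (a : ℂ) (p : S8) : a • p = C (C a) * p := by
  rw [algebra_compatible_smul R8 a p, smul_eq_C_mul, algebraMap_eq]

lemma term_monomial (r : R8) (a b : ℕ) :
    C r * X (0:Fin 2) ^ a * X 1 ^ b
      = monomial (Finsupp.single 0 a + Finsupp.single 1 b) r := by
  rw [C_mul_X_pow_eq_monomial, X_pow_eq_monomial, monomial_mul, mul_one]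

lemma addadd (a b c d : ℕ) :
    (Finsupp.single (0:Fin 2) a + Finsupp.single 1 b)
      + (Finsupp.single 0 c + Finsupp.single 1 d)
      = Finsupp.single 0 (a+c) + Finsupp.single 1 (b+d) := by
  rw [add_add_add_comm, ← Finsupp.single_add, ← Finsupp.single_add]

lemma cond_iff (a b : ℕ) :
    (Finsupp.single (0:Fin 2) a + Finsupp.single 1 b = Finsupp.single 0 8)
      ↔ (a = 8 ∧ b = 0) := by
  constructor
  · intro h
    have h0 := DFunLike.congr_fun h 0
    have h1 := DFunLike.congr_fun h 1
    simp [Finsupp.single_apply] at h0 h1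
    exact ⟨h0, h1⟩
  · rintro ⟨rfl, rfl⟩
    simp

lemma hA0 : (fun h => pderiv (0 : Fin 2) h)^[4] ((fun h => pderiv (1 : Fin 2) h)^[0] F8) =
      ((1680:ℂ)) • (MvPolynomial.C (X (0 : Fin 9)) * X (0:Fin 2) ^ 4 * X 1 ^ 0) +
      ((6720:ℂ)) • (MvPolynomial.C (X (1 : Fin 9)) * X (0:Fin 2) ^ 3 * X 1 ^ 1) +
      ((10080:ℂ)) • (MvPolynomial.C (X (2 : Fin 9)) * X (0:Fin 2) ^ 2 * X 1 ^ 2) +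
      ((6720:ℂ)) • (MvPolynomial.C (X (3 : Fin 9)) * X (0:Fin 2) ^ 1 * X 1 ^ 3) +
      ((1680:ℂ)) • (MvPolynomial.C (X (4 : Fin 9)) * X (0:Fin 2) ^ 0 * X 1 ^ 4) := by
  simp only [F8, Finset.sum_range_succ, Finset.sum_range_zero, zero_add,
    Function.iterate_succ_apply', Function.iterate_zero_apply,
    map_add, pderiv_csmul, pderiv_C_mul, pderiv_mul, pderiv_pow,
    pderiv_X_self, pderiv_X_of_ne (by decide : (0:Fin 2) ≠ 1),
    pderiv_X_of_ne (by decide : (1:Fin 2) ≠ 0), pderiv_C, pderiv_natCast,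
    mul_zero, zero_mul, mul_one, one_mul, add_zero, zero_add, smul_zero, pow_zero]
  norm_num [Nat.choose]
  open Fin.NatCast in simp only [csmulS, map_ofNat, map_natCast, map_one,
    show ((1:ℕ) : Fin 9) = 1 from rfl]
  ring

lemma hA1 : (fun h => pderiv (0 : Fin 2) h)^[3] ((fun h => pderiv (1 : Fin 2) h)^[1] F8) =
      ((1680:ℂ)) • (MvPolynomial.C (X (1 : Fin 9)) * X (0:Fin 2) ^ 4 * X 1 ^ 0) +
      ((6720:ℂ)) • (MvPolynomial.C (X (2 : Fin 9)) * X (0:Fin 2) ^ 3 * X 1 ^ 1) +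
      ((10080:ℂ)) • (MvPolynomial.C (X (3 : Fin 9)) * X (0:Fin 2) ^ 2 * X 1 ^ 2) +
      ((6720:ℂ)) • (MvPolynomial.C (X (4 : Fin 9)) * X (0:Fin 2) ^ 1 * X 1 ^ 3) +
      ((1680:ℂ)) • (MvPolynomial.C (X (5 : Fin 9)) * X (0:Fin 2) ^ 0 * X 1 ^ 4) := by
  simp only [F8, Finset.sum_range_succ, Finset.sum_range_zero, zero_add,
    Function.iterate_succ_apply', Function.iterate_zero_apply,
    map_add, pderiv_csmul, pderiv_C_mul, pderiv_mul, pderiv_pow,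
    pderiv_X_self, pderiv_X_of_ne (by decide : (0:Fin 2) ≠ 1),
    pderiv_X_of_ne (by decide : (1:Fin 2) ≠ 0), pderiv_C, pderiv_natCast,
    mul_zero, zero_mul, mul_one, one_mul, add_zero, zero_add, smul_zero, pow_zero]
  norm_num [Nat.choose]
  open Fin.NatCast in simp only [csmulS, map_ofNat, map_natCast, map_one,
    show ((1:ℕ) : Fin 9) = 1 from rfl]
  ring

lemma hA2 : (fun h => pderiv (0 : Fin 2) h)^[2] ((fun h => pderiv (1 : Fin 2) h)^[2] F8) =
      ((1680:ℂ)) • (MvPolynomial.C (X (2 : Fin 9)) * X (0:Fin 2) ^ 4 * X 1 ^ 0) +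
      ((6720:ℂ)) • (MvPolynomial.C (X (3 : Fin 9)) * X (0:Fin 2) ^ 3 * X 1 ^ 1) +
      ((10080:ℂ)) • (MvPolynomial.C (X (4 : Fin 9)) * X (0:Fin 2) ^ 2 * X 1 ^ 2) +
      ((6720:ℂ)) • (MvPolynomial.C (X (5 : Fin 9)) * X (0:Fin 2) ^ 1 * X 1 ^ 3) +
      ((1680:ℂ)) • (MvPolynomial.C (X (6 : Fin 9)) * X (0:Fin 2) ^ 0 * X 1 ^ 4) := by
  simp only [F8, Finset.sum_range_succ, Finset.sum_range_zero, zero_add,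
    Function.iterate_succ_apply', Function.iterate_zero_apply,
    map_add, pderiv_csmul, pderiv_C_mul, pderiv_mul, pderiv_pow,
    pderiv_X_self, pderiv_X_of_ne (by decide : (0:Fin 2) ≠ 1),
    pderiv_X_of_ne (by decide : (1:Fin 2) ≠ 0), pderiv_C, pderiv_natCast,
    mul_zero, zero_mul, mul_one, one_mul, add_zero, zero_add, smul_zero, pow_zero]
  norm_num [Nat.choose]
  simp only [csmulS, map_ofNat, map_natCast, map_one]
  ring

lemma hA3 : (fun h => pderiv (0 : Fin 2) h)^[1] ((fun h => pderiv (1 : Fin 2) h)^[3] F8) =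
      ((1680:ℂ)) • (MvPolynomial.C (X (3 : Fin 9)) * X (0:Fin 2) ^ 4 * X 1 ^ 0) +
      ((6720:ℂ)) • (MvPolynomial.C (X (4 : Fin 9)) * X (0:Fin 2) ^ 3 * X 1 ^ 1) +
      ((10080:ℂ)) • (MvPolynomial.C (X (5 : Fin 9)) * X (0:Fin 2) ^ 2 * X 1 ^ 2) +
      ((6720:ℂ)) • (MvPolynomial.C (X (6 : Fin 9)) * X (0:Fin 2) ^ 1 * X 1 ^ 3) +
      ((1680:ℂ)) • (MvPolynomial.C (X (7 : Fin 9)) * X (0:Fin 2) ^ 0 * X 1 ^ 4) := by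
  simp only [F8, Finset.sum_range_succ, Finset.sum_range_zero, zero_add,
    Function.iterate_succ_apply', Function.iterate_zero_apply,
    map_add, pderiv_csmul, pderiv_C_mul, pderiv_mul, pderiv_pow,
    pderiv_X_self, pderiv_X_of_ne (by decide : (0:Fin 2) ≠ 1),
    pderiv_X_of_ne (by decide : (1:Fin 2) ≠ 0), pderiv_C, pderiv_natCast,
    mul_zero, zero_mul, mul_one, one_mul, add_zero, zero_add, smul_zero, pow_zero]
  norm_num [Nat.choose]
  simp only [csmulS, map_ofNat, map_natCast, map_one]
  ring

lemma hA4 : (fun h => pderiv (0 : Fin 2) h)^[0] ((fun h => pderiv (1 : Fin 2) h)^[4] F8) =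
      ((1680:ℂ)) • (MvPolynomial.C (X (4 : Fin 9)) * X (0:Fin 2) ^ 4 * X 1 ^ 0) +
      ((6720:ℂ)) • (MvPolynomial.C (X (5 : Fin 9)) * X (0:Fin 2) ^ 3 * X 1 ^ 1) +
      ((10080:ℂ)) • (MvPolynomial.C (X (6 : Fin 9)) * X (0:Fin 2) ^ 2 * X 1 ^ 2) +
      ((6720:ℂ)) • (MvPolynomial.C (X (7 : Fin 9)) * X (0:Fin 2) ^ 1 * X 1 ^ 3) +
      ((1680:ℂ)) • (MvPolynomial.C (X (8 : Fin 9)) * X (0:Fin 2) ^ 0 * X 1 ^ 4) := by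
  simp only [F8, Finset.sum_range_succ, Finset.sum_range_zero, zero_add,
    Function.iterate_succ_apply', Function.iterate_zero_apply,
    map_add, pderiv_csmul, pderiv_C_mul, pderiv_mul, pderiv_pow,
    pderiv_X_self, pderiv_X_of_ne (by decide : (0:Fin 2) ≠ 1),
    pderiv_X_of_ne (by decide : (1:Fin 2) ≠ 0), pderiv_C, pderiv_natCast,
    mul_zero, zero_mul, mul_one, one_mul, add_zero, zero_add, smul_zero, pow_zero]
  norm_num [Nat.choose]
  simp only [csmulS, map_ofNat, map_natCast, map_one]
  ring
lemma coeff_part :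
      MvPolynomial.coeff (Finsupp.single (0 : Fin 2) 8) (transv 4 F8 F8) =
        ((5644800:ℚ) : ℂ) • (X 4 * X 0 - (4:ℂ) • (X 1 * X 3) + (3:ℂ) • (X 2 ^ 2) : R8) := by
  simp only [transv, Finset.sum_range_succ, Finset.sum_range_zero, zero_add, Nat.reduceSub]
  rw [hA0, hA1, hA2, hA3, hA4]
  simp only [term_monomial, smul_mul_assoc, mul_smul_comm, add_mul, mul_add, monomial_mul,
    addadd, smul_smul, smul_add]
  simp only [coeff_add, coeff_smul, coeff_monomial, cond_iff]
  norm_num [Nat.choose, smul_eq_C_mul]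
  simp only [map_ofNat]
  ring

/-- The fourth transvectant `(F,F)⁴` of the generic binary octic has leading coefficient
(the coefficient of `Y₁^8`) proportional to `x₄t - 4x₁x₃ + 3x₂²`, and this polynomial
equals `(z₄ + 3z₂²)/t²`. -/
theorem stmt10 :
    ∃ c : ℚ, c ≠ 0 ∧
      MvPolynomial.coeff (Finsupp.single (0 : Fin 2) 8) (transv 4 F8 F8) =
        (c : ℂ) • (X 4 * X 0 - (4:ℂ) • (X 1 * X 3) + (3:ℂ) • (X 2 ^ 2) : R8) ∧
      (X 0 : R8) ^ 2 * (X 4 * X 0 - (4:ℂ) • (X 1 * X 3) + (3:ℂ) • (X 2 ^ 2)) =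
        z 4 + (3:ℂ) • (z 2) ^ 2 := by
  refine ⟨5644800, by norm_num, coeff_part, ?_⟩
  simp only [z, Finset.sum_range_succ, Finset.sum_range_zero, smul_eq_C_mul, map_mul, map_pow,
    map_neg, map_one, map_ofNat, map_natCast]
  norm_num [Nat.choose]
  ring
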